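/- For a connected weighted graph, the map θ = √V_G · V S^{-1/2} (using the nonzero eigenpairs of the Laplacian) is a Euclidean embedding of the nodes in which the squared Euclidean distance between the rows corresponding to nodes i and j equals the commute time c(i,j). -/

import Mathlib

open Matrix BigOperators

/-- Uniqueness of the Moore–Penrose pseudoinverse. -/
lemma mp_unique_aux {n : ℕ} (L B C : Matrix (Fin n) (Fin n) ℝ)
    (hB1 : L*B*L = L) (hB2 : B*L*B = B) (hB3 : (L*B)ᵀ = L*B) (hB4 : (B*L)ᵀ = B*L)
    (hC1 : L*C*L = L) (hC2 : C*L*C = C) (hC3 : (L*C)ᵀ = L*C) (hC4 : (C*L)ᵀ = C*L) :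
    B = C := by
  have h1 : L*B = L*C := by
    calc L*B = (L*B)ᵀ := hB3.symm
    _ = ((L*C*L)*B)ᵀ := by rw [hC1]
    _ = ((L*C)*(L*B))ᵀ := by rw [Matrix.mul_assoc (L*C) L B]
    _ = (L*B)ᵀ * (L*C)ᵀ := by rw [Matrix.transpose_mul]
    _ = (L*B)*(L*C) := by rw [hB3, hC3]
    _ = (L*B*L)*C := by rw [Matrix.mul_assoc (L*B) L C]
    _ = L*C := by rw [hB1]
  have h2 : B*L = C*L := by
    calc B*L = (B*L)ᵀ := hB4.symm
    _ = (B*(L*C*L))ᵀ := by rw [hC1]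
    _ = ((B*L)*(C*L))ᵀ := by
        rw [← Matrix.mul_assoc, ← Matrix.mul_assoc, Matrix.mul_assoc (B*L) C L]
    _ = (C*L)ᵀ * (B*L)ᵀ := by rw [Matrix.transpose_mul]
    _ = (C*L)*(B*L) := by rw [hB4, hC4]
    _ = C*(L*B*L) := by rw [Matrix.mul_assoc, Matrix.mul_assoc]
    _ = C*L := by rw [hB1]
  calc B = B*L*B := hB2.symm
  _ = B*(L*C) := by rw [Matrix.mul_assoc, h1]
  _ = (B*L)*C := by rw [Matrix.mul_assoc]
  _ = C*L*C := by rw [h2]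
  _ = C := hC2

lemma sandwich_mul_aux {n : ℕ} (V : Matrix (Fin n) (Fin n) ℝ) (hVorth' : Vᵀ * V = 1)
    (a b : Fin n → ℝ) :
    (V * Matrix.diagonal a * Vᵀ) * (V * Matrix.diagonal b * Vᵀ)
      = V * Matrix.diagonal (fun k => a k * b k) * Vᵀ := by
  calc (V * Matrix.diagonal a * Vᵀ) * (V * Matrix.diagonal b * Vᵀ)
      = V * Matrix.diagonal a * (Vᵀ * V) * (Matrix.diagonal b * Vᵀ) := by
        simp only [Matrix.mul_assoc]
    _ = V * (Matrix.diagonal a * Matrix.diagonal b) * Vᵀ := by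
        rw [hVorth', Matrix.mul_one]; simp only [Matrix.mul_assoc]
    _ = _ := by rw [Matrix.diagonal_mul_diagonal]

lemma sandwich_transpose_aux {n : ℕ} (V : Matrix (Fin n) (Fin n) ℝ) (a : Fin n → ℝ) :
    (V * Matrix.diagonal a * Vᵀ)ᵀ = V * Matrix.diagonal a * Vᵀ := by
  simp [Matrix.transpose_mul, Matrix.diagonal_transpose, Matrix.mul_assoc]

lemma sandwich_apply_aux {n : ℕ} (V : Matrix (Fin n) (Fin n) ℝ) (a : Fin n → ℝ)
    (i j : Fin n) :
    (V * Matrix.diagonal a * Vᵀ) i j = ∑ k, V i k * a k * V j k := by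
  simp [Matrix.mul_apply, Matrix.diagonal_apply, Finset.sum_ite_eq, Matrix.transpose_apply]

lemma quad_form_aux {n : ℕ} (M : Matrix (Fin n) (Fin n) ℝ) (i j : Fin n) :
    (Pi.single i 1 - Pi.single j 1) ⬝ᵥ (M *ᵥ (Pi.single i 1 - Pi.single j 1))
      = M i i - M i j - M j i + M j j := by
  simp [sub_dotProduct, Matrix.mulVec_sub, dotProduct_sub,
    Matrix.mulVec_single, single_dotProduct, dotProduct_single]
  ring

/-- For a connected graph with Laplacian spectral decomposition `L = V S Vᵀ`
(with `λ_0 = 0` and all other eigenvalues positive), the map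
`θ = √V_G · V S^{-1/2}` (pseudo-inverse square root on the nonzero eigenvalues)
is a Euclidean embedding of the nodes in which the squared Euclidean distance
between rows `i` and `j` equals the commute time
`c i j = V_G (e_i - e_j)ᵀ L⁺ (e_i - e_j)`. -/
theorem commute_time_embedding {n : ℕ} [NeZero n]
    (L V S Lp : Matrix (Fin n) (Fin n) ℝ) (lam : Fin n → ℝ)
    (hS : S = Matrix.diagonal lam) (hL : L = V * S * Vᵀ)
    (hVorth : V * Vᵀ = 1) (hVorth' : Vᵀ * V = 1)
    (hlam0 : lam 0 = 0) (hlampos : ∀ i : Fin n, i ≠ 0 → 0 < lam i)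
    (hmp1 : L * Lp * L = L) (hmp2 : Lp * L * Lp = Lp)
    (hmp3 : (L * Lp)ᵀ = L * Lp) (hmp4 : (Lp * L)ᵀ = Lp * L)
    (VG : ℝ) (hVG : 0 < VG)
    (θ : Matrix (Fin n) (Fin n) ℝ)
    (hθ : ∀ r k, θ r k = Real.sqrt VG * V r k * (Real.sqrt (lam k))⁻¹) :
    ∀ i j, VG * ((Pi.single i 1 - Pi.single j 1) ⬝ᵥ
        (Lp *ᵥ (Pi.single i 1 - Pi.single j 1))) =
      ∑ k, (θ i k - θ j k) ^ 2 := by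
  have hlamnn : ∀ k, 0 ≤ lam k := by
    intro k
    rcases eq_or_ne k 0 with h | h
    · rw [h, hlam0]
    · exact (hlampos k h).le
  set g : Fin n → ℝ := fun k => (lam k)⁻¹ with hg
  set P : Matrix (Fin n) (Fin n) ℝ := V * Matrix.diagonal g * Vᵀ with hPdef
  have hLform : L = V * Matrix.diagonal lam * Vᵀ := by rw [hL, hS]
  -- P satisfies the four Penrose conditions
  have hP1 : L * P * L = L := by
    have hfun : (fun k => lam k * g k * lam k) = lam := by
      funext k
      rcases eq_or_ne (lam k) 0 with h | h
      · simp [hg, h]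
      · field_simp [hg]; simp [g, h]
    rw [hLform, hPdef, sandwich_mul_aux V hVorth', sandwich_mul_aux V hVorth', hfun]
  have hP2 : P * L * P = P := by
    have hfun : (fun k => g k * lam k * g k) = g := by
      funext k
      rcases eq_or_ne (lam k) 0 with h | h
      · simp [hg, h]
      · field_simp [hg]; simp [g, h]; field_simp
    rw [hLform, hPdef, sandwich_mul_aux V hVorth', sandwich_mul_aux V hVorth', hfun]
  have hP3 : (L * P)ᵀ = L * P := by
    rw [hLform, hPdef, sandwich_mul_aux V hVorth', sandwich_transpose_aux]
  have hP4 : (P * L)ᵀ = P * L := by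
    rw [hLform, hPdef, sandwich_mul_aux V hVorth', sandwich_transpose_aux]
  have hLpP : Lp = P := mp_unique_aux L Lp P hmp1 hmp2 hmp3 hmp4 hP1 hP2 hP3 hP4
  intro i j
  rw [hLpP, hPdef, quad_form_aux, sandwich_apply_aux, sandwich_apply_aux,
    sandwich_apply_aux, sandwich_apply_aux]
  have hsum : (∑ k, V i k * g k * V i k) - (∑ k, V i k * g k * V j k)
      - (∑ k, V j k * g k * V i k) + (∑ k, V j k * g k * V j k)
      = ∑ k, g k * (V i k - V j k) ^ 2 := by
    rw [← Finset.sum_sub_distrib, ← Finset.sum_sub_distrib, ← Finset.sum_add_distrib]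
    congr 1
    funext k
    ring
  rw [hsum, Finset.mul_sum]
  congr 1
  funext k
  have hsq : (θ i k - θ j k) ^ 2
      = (Real.sqrt VG) ^ 2 * (((Real.sqrt (lam k))⁻¹) ^ 2 * (V i k - V j k) ^ 2) := by
    rw [hθ, hθ]; ring
  rw [hsq, Real.sq_sqrt hVG.le, ← Real.sqrt_inv,
    Real.sq_sqrt (inv_nonneg.mpr (hlamnn k))]
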